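/- Let X be a two-dimensional real Banach space and let Y be a real Banach space of dimension at least two. Let T : X → Y be a bounded linear operator such that there exist x, y ∈ M_T with x ≠ y, x ≠ −y, (x+y)/‖x+y‖ ∉ M_T and (x−y)/‖x−y‖ ∉ M_T. Then T does not satisfy the Bhatia–Šemrl property; that is, there exists a bounded linear operator A : X → Y with T ⊥_B A such that Tx is not Birkhoff–James orthogonal to Ax for any x ∈ M_T. -/

import Mathlib

/-- Birkhoff–James orthogonality: `x ⊥_B y` iff `‖x + λ y‖ ≥ ‖x‖` for all real `λ`. -/
def BJOrth {E : Type*} [NormedAddCommGroup E] [NormedSpace ℝ E] (x y : E) : Prop :=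
  ∀ lam : ℝ, ‖x‖ ≤ ‖x + lam • y‖

/-- The norm attainment set of a bounded linear operator. -/
def normAttainSet {X Y : Type*} [NormedAddCommGroup X] [NormedSpace ℝ X]
    [NormedAddCommGroup Y] [NormedSpace ℝ Y] (T : X →L[ℝ] Y) : Set X :=
  {x | ‖x‖ = 1 ∧ ‖T x‖ = ‖T‖}

lemma james {Y : Type*} [NormedAddCommGroup Y] [NormedSpace ℝ Y]
    (e w : Y) (he : e ≠ 0)
    (h : ∀ a b : ℝ, |a| * ‖e‖ ≤ ‖a • e + b • w‖) :
    ∃ ψ : Y →L[ℝ] ℝ, ‖ψ‖ ≤ 1 ∧ ψ e = ‖e‖ ∧ ψ w = 0 := by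
  have : Nontrivial Y := ⟨e, 0, he⟩
  by_cases hdep : ∃ k : ℝ, w = k • e
  · obtain ⟨k, rfl⟩ := hdep
    by_cases hk : k = 0
    · obtain ⟨ψ, hψ1, hψ2⟩ := exists_dual_vector ℝ e (norm_ne_zero_iff.2 he)
      exact ⟨ψ, le_of_eq hψ1, hψ2, by simp [hk]⟩
    · exfalso
      have h0 := h 1 (-1/k)
      have hz : (1:ℝ) • e + (-1/k) • k • e = 0 := by
        rw [smul_smul]
        field_simp
        simp
      rw [hz] at h0
      simp at h0
      exact he (by simpa using h0)
  · have hindep : LinearIndependent ℝ ![e, w] := by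
      rw [LinearIndependent.pair_iff]
      intro s t hst
      by_cases ht : t = 0
      · subst ht
        refine ⟨?_, rfl⟩
        simp only [zero_smul, add_zero] at hst
        rcases smul_eq_zero.1 hst with h' | h'
        · exact h'
        · exact absurd h' he
      · exfalso
        apply hdep
        refine ⟨-s/t, ?_⟩
        have h1 : t • w = (-s) • e := by
          have h2 := eq_neg_of_add_eq_zero_left hst
          rw [neg_smul]
          exact (neg_eq_iff_eq_neg.mpr h2).symm
        have h2 := congrArg (fun z => t⁻¹ • z) h1
        simp only [smul_smul] at h2
        rw [inv_mul_cancel₀ ht, one_smul] at h2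
        rw [h2, div_eq_inv_mul]
    set p : Submodule ℝ Y := Submodule.span ℝ (Set.range ![e, w]) with hp
    haveI : FiniteDimensional ℝ p := FiniteDimensional.span_of_finite ℝ (Set.finite_range _)
    set B : Module.Basis (Fin 2) ℝ p := Module.Basis.span hindep with hB
    have hB0 : (B 0 : Y) = e := by rw [hB, Module.Basis.span_apply]; rfl
    have hB1 : (B 1 : Y) = w := by rw [hB, Module.Basis.span_apply]; rfl
    set f₀ : p →ₗ[ℝ] ℝ := ‖e‖ • (B.coord 0) with hf₀
    set f : p →L[ℝ] ℝ := LinearMap.toContinuousLinearMap f₀ with hf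
    have hfval : ∀ q : p, f q = ‖e‖ * B.repr q 0 := by
      intro q
      simp [hf, hf₀, Module.Basis.coord_apply]
    have hqrep : ∀ q : p, (q : Y) = (B.repr q 0) • e + (B.repr q 1) • w := by
      intro q
      conv_lhs => rw [← B.sum_repr q]
      simp only [Fin.sum_univ_two, Submodule.coe_add, Submodule.coe_smul, hB0, hB1]
    have hfnorm : ‖f‖ ≤ 1 := by
      apply ContinuousLinearMap.opNorm_le_bound f zero_le_one
      intro q
      rw [hfval q, one_mul]
      calc ‖‖e‖ * B.repr q 0‖ = |B.repr q 0| * ‖e‖ := by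
            rw [Real.norm_eq_abs, abs_mul, abs_norm, mul_comm]
        _ ≤ ‖(B.repr q 0) • e + (B.repr q 1) • w‖ := h _ _
        _ = ‖(q : Y)‖ := by rw [← hqrep q]
        _ = ‖q‖ := rfl
    obtain ⟨ψ, hext, hnorm⟩ := exists_extension_norm_eq p f
    have heq : ∀ (z : Y) (hz : z ∈ p), ψ z = f ⟨z, hz⟩ := fun z hz => hext ⟨z, hz⟩
    have hep : e ∈ p := Submodule.subset_span ⟨0, rfl⟩
    have hwp : w ∈ p := Submodule.subset_span ⟨1, rfl⟩
    have hBe : (⟨e, hep⟩ : p) = B 0 := by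
      apply Subtype.ext; rw [hB0]
    have hBw : (⟨w, hwp⟩ : p) = B 1 := by
      apply Subtype.ext; rw [hB1]
    refine ⟨ψ, ?_, ?_, ?_⟩
    · rw [hnorm]; exact hfnorm
    · rw [heq e hep, hfval, hBe]
      simp
    · rw [heq w hwp, hfval, hBw]
      simp


set_option maxHeartbeats 1000000 in
/-- If `X` is a two-dimensional real Banach space, `Y` a real Banach space of
dimension at least two, and `T : X → Y` is a bounded linear operator for which there are
`x, y ∈ M_T` with `x ≠ ±y` and `(x+y)/‖x+y‖, (x−y)/‖x−y‖ ∉ M_T`, then `T` does not satisfy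
the Bhatia–Šemrl property. -/
theorem stmt1 {X Y : Type*} [NormedAddCommGroup X] [NormedSpace ℝ X] [CompleteSpace X]
    [NormedAddCommGroup Y] [NormedSpace ℝ Y] [CompleteSpace Y]
    (hX : Module.finrank ℝ X = 2) (hY : 2 ≤ Module.rank ℝ Y)
    (T : X →L[ℝ] Y) (x y : X)
    (hx : x ∈ normAttainSet T) (hy : y ∈ normAttainSet T)
    (hxy : x ≠ y) (hxy' : x ≠ -y)
    (hplus : ‖x + y‖⁻¹ • (x + y) ∉ normAttainSet T)
    (hminus : ‖x - y‖⁻¹ • (x - y) ∉ normAttainSet T) :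
    ∃ A : X →L[ℝ] Y, (∀ lam : ℝ, ‖T‖ ≤ ‖T + lam • A‖) ∧
      ∀ z ∈ normAttainSet T, ¬ BJOrth (T z) (A z) := by
  classical
  obtain ⟨hxn, hxT⟩ := hx
  obtain ⟨hyn, hyT⟩ := hy
  haveI : FiniteDimensional ℝ X := FiniteDimensional.of_finrank_pos (by rw [hX]; norm_num)
  have hx0 : x ≠ 0 := by intro h; rw [h, norm_zero] at hxn; exact zero_ne_one hxn
  have hy0 : y ≠ 0 := by intro h; rw [h, norm_zero] at hyn; exact zero_ne_one hyn
  have hxy0 : x + y ≠ 0 := by intro h; exact hxy' (eq_neg_of_add_eq_zero_left h)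
  have hxmy0 : x - y ≠ 0 := sub_ne_zero.2 hxy
  -- pairwise independence of x, y
  have hpair : ∀ s t : ℝ, s • x + t • y = 0 → s = 0 ∧ t = 0 := by
    intro s t hst
    by_cases ht : t = 0
    · subst ht
      refine ⟨?_, rfl⟩
      simp only [zero_smul, add_zero] at hst
      rcases smul_eq_zero.1 hst with h' | h'
      · exact h'
      · exact absurd h' hx0
    · exfalso
      have h1 : y = (-s / t) • x := by
        have h2 : t • y = (-s) • x := by
          rw [neg_smul]
          exact (neg_eq_iff_eq_neg.mpr (eq_neg_of_add_eq_zero_left hst)).symm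
        calc y = t⁻¹ • (t • y) := by rw [smul_smul, inv_mul_cancel₀ ht, one_smul]
          _ = t⁻¹ • ((-s) • x) := by rw [h2]
          _ = (-s / t) • x := by rw [smul_smul, div_eq_inv_mul]
      have h3 : |(-s / t)| = 1 := by
        have h4 := congrArg norm h1
        rw [hyn, norm_smul, hxn, mul_one, Real.norm_eq_abs] at h4
        exact h4.symm
      rcases abs_eq (zero_le_one) |>.1 h3 with h5 | h5
      · rw [h5, one_smul] at h1; exact hxy h1.symm
      · rw [h5, neg_one_smul] at h1
        exact hxy' (by rw [h1, neg_neg])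
  -- the curve σ and its normalization n
  set σ : ℝ → X := fun t => (1 - t) • x + t • y with hσdef
  have hσne : ∀ t : ℝ, σ t ≠ 0 := by
    intro t h
    obtain ⟨h1, h2⟩ := hpair _ _ (by rw [hσdef] at h; exact h)
    rw [h2, sub_zero] at h1
    exact one_ne_zero h1
  set n : ℝ → X := fun t => ‖σ t‖⁻¹ • σ t with hndef
  have hnval : ∀ t, n t = ‖σ t‖⁻¹ • σ t := fun t => rfl
  have hnnorm : ∀ t, ‖n t‖ = 1 := by
    intro t
    rw [hnval]
    exact norm_smul_inv_norm (hσne t)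
  have hσcont : Continuous σ := by
    rw [hσdef]
    exact ((continuous_const.sub continuous_id).smul continuous_const).add
      (continuous_id.smul continuous_const)
  have hncont : Continuous n := by
    rw [hndef]
    exact ((hσcont.norm).inv₀ (fun t => norm_ne_zero_iff.2 (hσne t))).smul hσcont
  have hMclosed : IsClosed (normAttainSet T) := by
    have he : normAttainSet T = {z : X | ‖z‖ = 1} ∩ {z : X | ‖T z‖ = ‖T‖} := rfl
    rw [he]
    exact (isClosed_eq continuous_norm continuous_const).inter
      (isClosed_eq (T.continuous.norm) continuous_const)
  have hMneg : ∀ z, z ∈ normAttainSet T → -z ∈ normAttainSet T := by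
    intro z hz
    exact ⟨by rw [norm_neg]; exact hz.1, by rw [map_neg, norm_neg]; exact hz.2⟩
  set E : Set ℝ := {t : ℝ | t ∈ Set.Icc (0:ℝ) 1 ∧ n t ∈ normAttainSet T} with hEdef
  have hEclosed : IsClosed E := by
    have he : E = Set.Icc (0:ℝ) 1 ∩ (n ⁻¹' normAttainSet T) := rfl
    rw [he]
    exact isClosed_Icc.inter (hMclosed.preimage hncont)
  have hσ0 : σ 0 = x := by rw [hσdef]; simp
  have hσ1 : σ 1 = y := by rw [hσdef]; simp
  have hn0 : n 0 = x := by rw [hnval]; simp only [hσ0, hxn]; norm_num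
  have hn1 : n 1 = y := by rw [hnval]; simp only [hσ1, hyn]; norm_num
  have h0E : (0:ℝ) ∈ E := ⟨⟨le_refl 0, zero_le_one⟩, by rw [hn0]; exact ⟨hxn, hxT⟩⟩
  have h1E : (1:ℝ) ∈ E := ⟨⟨zero_le_one, le_refl 1⟩, by rw [hn1]; exact ⟨hyn, hyT⟩⟩
  have hnhalf : n (1/2 : ℝ) = ‖x + y‖⁻¹ • (x + y) := by
    have hσh : σ (1/2 : ℝ) = (2:ℝ)⁻¹ • (x + y) := by
      simp only [hσdef]
      module
    have hne2 : ‖x + y‖ ≠ 0 := norm_ne_zero_iff.2 hxy0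
    simp only [hnval, hσh, norm_smul, Real.norm_eq_abs]
    rw [smul_smul]
    congr 1
    rw [abs_of_nonneg (by norm_num : (0:ℝ) ≤ (2:ℝ)⁻¹)]
    field_simp
  have hhalfE : (1/2 : ℝ) ∉ E := by
    intro h
    exact hplus (by rw [← hnhalf]; exact h.2)
  -- gap endpoints
  set S1 : Set ℝ := E ∩ Set.Iic (1/2 : ℝ) with hS1def
  set S2 : Set ℝ := E ∩ Set.Ici (1/2 : ℝ) with hS2def
  have hS1ne : (0:ℝ) ∈ S1 := ⟨h0E, by norm_num⟩
  have hS2ne : (1:ℝ) ∈ S2 := ⟨h1E, by norm_num⟩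
  have hS1bdd : BddAbove S1 := BddAbove.mono Set.inter_subset_right bddAbove_Iic
  have hS2bdd : BddBelow S2 := BddBelow.mono Set.inter_subset_right bddBelow_Ici
  set t₁ : ℝ := sSup S1 with ht₁def
  set t₂ : ℝ := sInf S2 with ht₂def
  have ht₁mem : t₁ ∈ S1 := (hEclosed.inter isClosed_Iic).csSup_mem ⟨0, hS1ne⟩ hS1bdd
  have ht₂mem : t₂ ∈ S2 := (hEclosed.inter isClosed_Ici).csInf_mem ⟨1, hS2ne⟩ hS2bdd
  have ht₁half : t₁ < 1/2 :=
    lt_of_le_of_ne ht₁mem.2 (fun h => hhalfE (h ▸ ht₁mem.1))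
  have ht₂half : 1/2 < t₂ :=
    lt_of_le_of_ne ht₂mem.2 (fun h => hhalfE (by rw [h]; exact ht₂mem.1))
  have ht12 : t₁ < t₂ := lt_trans ht₁half ht₂half
  have ht₁0 : 0 ≤ t₁ := ht₁mem.1.1.1
  have ht₂1 : t₂ ≤ 1 := ht₂mem.1.1.2
  have hgap : ∀ t : ℝ, t₁ < t → t < t₂ → n t ∉ normAttainSet T := by
    intro t h1 h2 hmem
    have htIcc : t ∈ Set.Icc (0:ℝ) 1 := ⟨le_trans ht₁0 h1.le, le_trans h2.le ht₂1⟩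
    have htE : t ∈ E := ⟨htIcc, hmem⟩
    rcases le_or_gt t (1/2 : ℝ) with h | h
    · exact absurd (le_csSup hS1bdd ⟨htE, h⟩) (not_le.2 h1)
    · exact absurd (csInf_le hS2bdd ⟨htE, h.le⟩) (not_le.2 h2)
  set u : X := n t₁ with hudef
  set v : X := n t₂ with hvdef
  have huM : u ∈ normAttainSet T := ht₁mem.1.2
  have hvM : v ∈ normAttainSet T := ht₂mem.1.2
  have hun : ‖u‖ = 1 := hnnorm t₁
  have hvn : ‖v‖ = 1 := hnnorm t₂
  set r₁ : ℝ := ‖σ t₁‖ with hr₁def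
  set r₂ : ℝ := ‖σ t₂‖ with hr₂def
  have hr₁pos : 0 < r₁ := norm_pos_iff.2 (hσne t₁)
  have hr₂pos : 0 < r₂ := norm_pos_iff.2 (hσne t₂)
  have hu : u = r₁⁻¹ • σ t₁ := rfl
  have hv : v = r₂⁻¹ • σ t₂ := rfl
  have hT0 : 0 < ‖T‖ := by
    rcases (norm_nonneg T).lt_or_eq with h | h
    · exact h
    · exfalso
      apply hplus
      refine ⟨norm_smul_inv_norm hxy0, ?_⟩
      have h1 := T.le_opNorm (‖x + y‖⁻¹ • (x + y))
      rw [← h, zero_mul] at h1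
      have h2 : ‖T (‖x + y‖⁻¹ • (x + y))‖ = 0 := le_antisymm h1 (norm_nonneg _)
      rw [h2, ← h]
  have hTu : ‖T u‖ = ‖T‖ := huM.2
  have hTv : ‖T v‖ = ‖T‖ := hvM.2
  clear_value t₁ t₂
  clear ht₁def ht₂def hS1def hS2def hS1ne hS2ne hS1bdd hS2bdd ht₁mem ht₂mem
  clear_value S1 S2
  clear S1 S2
  clear_value u v r₁ r₂
  clear hudef hvdef hr₁def hr₂def
  -- independence of u, v
  have hpairuv : ∀ s t : ℝ, s • u + t • v = 0 → s = 0 ∧ t = 0 := by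
    intro s t hst
    rw [hu, hv, smul_smul, smul_smul] at hst
    simp only [hσdef] at hst
    have h2 : ((s * r₁⁻¹) * (1 - t₁) + (t * r₂⁻¹) * (1 - t₂)) • x
        + ((s * r₁⁻¹) * t₁ + (t * r₂⁻¹) * t₂) • y = 0 := by
      rw [← hst]; module
    obtain ⟨hA, hB⟩ := hpair _ _ h2
    have h3 : (s * r₁⁻¹) + (t * r₂⁻¹) = 0 := by linear_combination hA + hB
    have h4 : (s * r₁⁻¹) * (t₂ - t₁) = 0 := by linear_combination t₂ * h3 - hB
    have h5 : s * r₁⁻¹ = 0 := by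
      rcases mul_eq_zero.1 h4 with h | h
      · exact h
      · exact absurd h (sub_ne_zero.2 ht12.ne')
    have h6 : t * r₂⁻¹ = 0 := by linarith
    constructor
    · rcases mul_eq_zero.1 h5 with h | h
      · exact h
      · exact absurd h (inv_ne_zero (ne_of_gt hr₁pos))
    · rcases mul_eq_zero.1 h6 with h | h
      · exact h
      · exact absurd h (inv_ne_zero (ne_of_gt hr₂pos))
  have hinduv : LinearIndependent ℝ ![u, v] := LinearIndependent.pair_iff.2 hpairuv
  have hspan : ∀ z : X, ∃ a b : ℝ, a • u + b • v = z := by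
    intro z
    have h1 : Submodule.span ℝ (Set.range ![u, v]) = ⊤ := by
      apply Submodule.eq_top_of_finrank_eq
      rw [finrank_span_eq_card hinduv, hX]
      simp
    have h2 : z ∈ Submodule.span ℝ ({u, v} : Set X) := by
      have hr : Set.range ![u, v] = ({u, v} : Set X) := by
        ext w
        simp only [Set.mem_range, Fin.exists_fin_two, Set.mem_insert_iff, Set.mem_singleton_iff,
          Matrix.cons_val_zero, Matrix.cons_val_one, Matrix.head_cons]
        tauto
      rw [← hr, h1]
      trivial
    exact Submodule.mem_span_pair.1 h2
  -- the key positive-combination contradiction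
  have posCombo : ∀ a b : ℝ, 0 < a → 0 < b →
      ‖T (a • u + b • v)‖ = ‖T‖ * ‖a • u + b • v‖ → False := by
    intro a b ha hb heq
    have hα : 0 < a * r₁⁻¹ := by positivity
    have hβ : 0 < b * r₂⁻¹ := by positivity
    have hs0 : 0 < a * r₁⁻¹ + b * r₂⁻¹ := by linarith
    have hsne : a * r₁⁻¹ + b * r₂⁻¹ ≠ 0 := ne_of_gt hs0
    set ts : ℝ := ((a * r₁⁻¹) * t₁ + (b * r₂⁻¹) * t₂) / (a * r₁⁻¹ + b * r₂⁻¹) with htsdef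
    have h1 : t₁ < ts := by
      rw [htsdef, lt_div_iff₀ hs0]
      nlinarith
    have h2 : ts < t₂ := by
      rw [htsdef, div_lt_iff₀ hs0]
      nlinarith
    have hw : a • u + b • v = (a * r₁⁻¹ + b * r₂⁻¹) • σ ts := by
      rw [hu, hv, smul_smul, smul_smul]
      simp only [hσdef]
      match_scalars
      · rw [htsdef]; field_simp; ring
      · rw [htsdef]; field_simp
    have hσts : σ ts ≠ 0 := hσne ts
    have hrts : 0 < ‖σ ts‖ := norm_pos_iff.2 hσts
    rw [hw, map_smul, norm_smul, norm_smul, Real.norm_eq_abs, abs_of_pos hs0] at heq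
    have hTσ : ‖T (σ ts)‖ = ‖T‖ * ‖σ ts‖ := by
      apply mul_left_cancel₀ hsne
      rw [heq]; ring
    have hmem : n ts ∈ normAttainSet T := by
      refine ⟨hnnorm ts, ?_⟩
      rw [hnval, map_smul, norm_smul, hTσ, Real.norm_eq_abs, abs_inv, abs_norm]
      field_simp
    exact hgap ts h1 h2 hmem
  -- main positive case
  have mainPos : ∀ z : X, z ∈ normAttainSet T → ∀ a b : ℝ, a • u + b • v = z →
      ∀ ψ : Y →L[ℝ] ℝ, ‖ψ‖ ≤ 1 → ψ (T z) = ‖T‖ → ψ (T u) = ψ (T v) → 0 < ψ (T u) → False := by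
    intro z hzM a b hzeq ψ hψ hψz hcuv hcpos
    have hval : (a + b) * ψ (T u) = ‖T‖ := by
      have hh : ψ (T z) = a * ψ (T u) + b * ψ (T v) := by
        rw [← hzeq]
        simp [map_add, map_smul]
      rw [← hψz, hh, ← hcuv]
      ring
    have hcleT : ψ (T u) ≤ ‖T‖ := by
      calc ψ (T u) ≤ |ψ (T u)| := le_abs_self _
        _ ≤ ‖ψ‖ * ‖T u‖ := by rw [← Real.norm_eq_abs]; exact ψ.le_opNorm _
        _ ≤ 1 * ‖T‖ := by rw [hTu]; exact mul_le_mul_of_nonneg_right hψ (norm_nonneg _)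
        _ = ‖T‖ := one_mul _
    rcases eq_or_lt_of_le hcleT with hflat | hlt
    · -- flat case: ψ norms both T u and T v
      have h2T : 2 * ‖T‖ ≤ ‖T (u + v)‖ := by
        have hh : ψ (T (u + v)) = 2 * ‖T‖ := by
          rw [map_add, map_add, ← hcuv, hflat]
          ring
        calc 2 * ‖T‖ = ψ (T (u + v)) := hh.symm
          _ ≤ |ψ (T (u + v))| := le_abs_self _
          _ ≤ ‖ψ‖ * ‖T (u + v)‖ := by rw [← Real.norm_eq_abs]; exact ψ.le_opNorm _
          _ ≤ 1 * ‖T (u + v)‖ := mul_le_mul_of_nonneg_right hψ (norm_nonneg _)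
          _ = ‖T (u + v)‖ := one_mul _
      have hle1 : ‖T (u + v)‖ ≤ ‖T‖ * ‖u + v‖ := T.le_opNorm _
      have huv2 : ‖u + v‖ ≤ 2 := by
        calc ‖u + v‖ ≤ ‖u‖ + ‖v‖ := norm_add_le _ _
          _ = 2 := by rw [hun, hvn]; norm_num
      have heq2 : ‖T (u + v)‖ = ‖T‖ * ‖u + v‖ := le_antisymm hle1 (by nlinarith)
      exact posCombo 1 1 one_pos one_pos (by rw [one_smul, one_smul]; exact heq2)
    · have hab1 : 1 < a + b := by
        by_contra hc
        push_neg at hc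
        have h8 := mul_le_mul_of_nonneg_right hc (le_of_lt hcpos)
        rw [hval, one_mul] at h8
        linarith
      have hzn : ‖z‖ = 1 := hzM.1
      have ha : 0 < a := by
        by_contra hble
        push_neg at hble
        have hbv : b • v = z - a • u := by rw [← hzeq]; abel
        have h9 : ‖b • v‖ ≤ ‖z‖ + ‖a • u‖ := by
          rw [hbv]
          exact norm_sub_le _ _
        rw [norm_smul, norm_smul, hun, hvn, mul_one, mul_one, hzn] at h9
        have h10 : b ≤ |b| := le_abs_self b
        have h11 : |a| = -a := abs_of_nonpos hble
        rw [Real.norm_eq_abs, Real.norm_eq_abs] at h9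
        linarith
      have hb : 0 < b := by
        by_contra hble
        push_neg at hble
        have hbu : a • u = z - b • v := by rw [← hzeq]; abel
        have h9 : ‖a • u‖ ≤ ‖z‖ + ‖b • v‖ := by
          rw [hbu]
          exact norm_sub_le _ _
        rw [norm_smul, norm_smul, hun, hvn, mul_one, mul_one, hzn] at h9
        have h10 : a ≤ |a| := le_abs_self a
        have h11 : |b| = -b := abs_of_nonpos hble
        rw [Real.norm_eq_abs, Real.norm_eq_abs] at h9
        linarith
      apply posCombo a b ha hb
      rw [hzeq, hzM.2, hzn, mul_one]
  -- the main claim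
  have main : ∀ z : X, z ∈ normAttainSet T → ∀ ψ : Y →L[ℝ] ℝ, ‖ψ‖ ≤ 1 → ψ (T z) = ‖T‖ →
      ψ (T u) = ψ (T v) → False := by
    intro z hzM ψ hψ hψz hcuv
    obtain ⟨a, b, hzeq⟩ := hspan z
    have hval : (a + b) * ψ (T u) = ‖T‖ := by
      have hh : ψ (T z) = a * ψ (T u) + b * ψ (T v) := by
        rw [← hzeq]
        simp [map_add, map_smul]
      rw [← hψz, hh, ← hcuv]
      ring
    rcases lt_trichotomy (ψ (T u)) 0 with hneg | hzero | hpos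
    · refine mainPos (-z) (hMneg z hzM) (-a) (-b) ?_ (-ψ) ?_ ?_ ?_ ?_
      · rw [← hzeq]; module
      · rw [norm_neg]; exact hψ
      · rw [map_neg]
        simp only [ContinuousLinearMap.neg_apply, map_neg, neg_neg]
        exact hψz
      · simp only [ContinuousLinearMap.neg_apply, neg_inj]
        exact hcuv
      · simp only [ContinuousLinearMap.neg_apply]
        linarith
    · rw [hzero, mul_zero] at hval
      exact hT0.ne' hval.symm
    · exact mainPos z hzM a b hzeq ψ hψ hψz hcuv hpos
  -- the functional g with kernel spanned by x - y
  have hindxy : LinearIndependent ℝ ![x, y] := LinearIndependent.pair_iff.2 hpair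
  have hspanxy : ⊤ ≤ Submodule.span ℝ (Set.range ![x, y]) := by
    rw [show Submodule.span ℝ (Set.range ![x, y]) = ⊤ by
      apply Submodule.eq_top_of_finrank_eq
      rw [finrank_span_eq_card hindxy, hX]
      simp]
  set bxy : Module.Basis (Fin 2) ℝ X := Module.Basis.mk hindxy hspanxy with hbxydef
  have hbxy0 : bxy 0 = x := by rw [hbxydef, Module.Basis.mk_apply]; rfl
  have hbxy1 : bxy 1 = y := by rw [hbxydef, Module.Basis.mk_apply]; rfl
  set g : X →L[ℝ] ℝ := LinearMap.toContinuousLinearMap (bxy.coord 0 + bxy.coord 1) with hgdef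
  have hgapply : ∀ z : X, g z = bxy.repr z 0 + bxy.repr z 1 := by
    intro z
    rw [hgdef]
    simp [Module.Basis.coord_apply]
  have hgx : g x = 1 := by
    rw [show x = bxy 0 from hbxy0.symm, hgapply]
    simp [Module.Basis.repr_self]
  have hgy : g y = 1 := by
    rw [show y = bxy 1 from hbxy1.symm, hgapply]
    simp [Module.Basis.repr_self]
  have hgσ : ∀ t : ℝ, g (σ t) = 1 := by
    intro t
    have hσt : σ t = (1 - t) • x + t • y := by rw [hσdef]
    rw [hσt, map_add, map_smul, map_smul, hgx, hgy, smul_eq_mul, smul_eq_mul]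
    ring
  have hgu : g u = r₁⁻¹ := by
    rw [hu, map_smul, smul_eq_mul, hgσ, mul_one]
  have hgv : g v = r₂⁻¹ := by
    rw [hv, map_smul, smul_eq_mul, hgσ, mul_one]
  have hgupos : 0 < g u := by rw [hgu]; positivity
  have hgvpos : 0 < g v := by rw [hgv]; positivity
  have hgker : ∀ z : X, z ∈ normAttainSet T → g z ≠ 0 := by
    intro z hzM hgz
    obtain ⟨c0, c1, hzrep, hsum⟩ : ∃ c0 c1 : ℝ, z = c0 • x + c1 • y ∧ c0 + c1 = 0 := by
      refine ⟨bxy.repr z 0, bxy.repr z 1, ?_, ?_⟩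
      · conv_lhs => rw [← bxy.sum_repr z]
        rw [Fin.sum_univ_two, hbxy0, hbxy1]
      · rw [← hgapply]
        exact hgz
    have hc1 : c1 = - c0 := by linarith
    have hzxy : z = c0 • (x - y) := by
      rw [hzrep, hc1]
      module
    have hzn : ‖z‖ = 1 := hzM.1
    have hnorm1 : |c0| * ‖x - y‖ = 1 := by
      rw [hzxy, norm_smul, Real.norm_eq_abs] at hzn
      exact hzn
    have hne : ‖x - y‖ ≠ 0 := norm_ne_zero_iff.2 hxmy0
    have h7 : ‖x - y‖⁻¹ = |c0| := by
      field_simp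
      linarith [hnorm1]
    have hc0 : c0 ≠ 0 := by
      intro h
      rw [h, abs_zero, zero_mul] at hnorm1
      exact zero_ne_one hnorm1
    rcases hc0.lt_or_gt with hneg | hpos
    · apply hminus
      have hm : ‖x - y‖⁻¹ • (x - y) = -z := by
        rw [h7, abs_of_neg hneg, hzxy, neg_smul]
      rw [hm]
      exact hMneg z hzM
    · apply hminus
      have hm : ‖x - y‖⁻¹ • (x - y) = z := by
        rw [h7, abs_of_pos hpos, ← hzxy]
      rw [hm]
      exact hzM
  -- the operator A
  set A : X →L[ℝ] Y := g.smulRight (T v - T u) with hAdef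
  have hAapply : ∀ z : X, A z = g z • (T v - T u) := by
    intro z
    rw [hAdef, ContinuousLinearMap.smulRight_apply]
  have happly : ∀ (lam : ℝ) (z : X), (T + lam • A) z = T z + (lam * g z) • (T v - T u) := by
    intro lam z
    rw [ContinuousLinearMap.add_apply, ContinuousLinearMap.smul_apply, hAapply, smul_smul]
  have hTu0 : T u ≠ 0 := fun h => hT0.ne' (by rw [← hTu, h, norm_zero])
  have hTv0 : T v ≠ 0 := fun h => hT0.ne' (by rw [← hTv, h, norm_zero])
  refine ⟨A, ?_, ?_⟩
  · -- T is Birkhoff-James orthogonal to A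
    intro lam
    rcases le_or_gt 0 lam with hlam | hlam
    · obtain ⟨ψ, hψn, hψv'⟩ := exists_dual_vector ℝ (T v) (norm_ne_zero_iff.2 hTv0)
      have hψv : ψ (T v) = ‖T‖ := by
        rw [← hTv]
        exact_mod_cast hψv'
      have hψu : ψ (T u) ≤ ‖T‖ := by
        calc ψ (T u) ≤ |ψ (T u)| := le_abs_self _
          _ ≤ ‖ψ‖ * ‖T u‖ := by rw [← Real.norm_eq_abs]; exact ψ.le_opNorm _
          _ = ‖T‖ := by rw [hψn, one_mul, hTu]
      have hkey : ψ ((T + lam • A) v) = ‖T‖ + lam * g v * (‖T‖ - ψ (T u)) := by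
        rw [happly, map_add, map_smul, smul_eq_mul, map_sub, hψv]
        try ring
      calc ‖T‖ ≤ ‖T‖ + lam * g v * (‖T‖ - ψ (T u)) := by
            have h0 : 0 ≤ lam * g v * (‖T‖ - ψ (T u)) :=
              mul_nonneg (mul_nonneg hlam hgvpos.le) (by linarith)
            linarith
        _ = ψ ((T + lam • A) v) := hkey.symm
        _ ≤ |ψ ((T + lam • A) v)| := le_abs_self _
        _ ≤ ‖ψ‖ * ‖(T + lam • A) v‖ := by rw [← Real.norm_eq_abs]; exact ψ.le_opNorm _
        _ = ‖(T + lam • A) v‖ := by rw [hψn, one_mul]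
        _ ≤ ‖T + lam • A‖ := (T + lam • A).unit_le_opNorm v (le_of_eq hvn)
    · obtain ⟨ψ, hψn, hψu'⟩ := exists_dual_vector ℝ (T u) (norm_ne_zero_iff.2 hTu0)
      have hψu : ψ (T u) = ‖T‖ := by
        rw [← hTu]
        exact_mod_cast hψu'
      have hψv : ψ (T v) ≤ ‖T‖ := by
        calc ψ (T v) ≤ |ψ (T v)| := le_abs_self _
          _ ≤ ‖ψ‖ * ‖T v‖ := by rw [← Real.norm_eq_abs]; exact ψ.le_opNorm _
          _ = ‖T‖ := by rw [hψn, one_mul, hTv]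
      have hkey : ψ ((T + lam • A) u) = ‖T‖ + lam * g u * (ψ (T v) - ‖T‖) := by
        rw [happly, map_add, map_smul, smul_eq_mul, map_sub, hψu]
        try ring
      calc ‖T‖ ≤ ‖T‖ + lam * g u * (ψ (T v) - ‖T‖) := by
            have h1 : 0 ≤ (-lam) * g u := mul_nonneg (by linarith) hgupos.le
            have h2 : 0 ≤ ‖T‖ - ψ (T v) := by linarith
            nlinarith [mul_nonneg h1 h2]
        _ = ψ ((T + lam • A) u) := hkey.symm
        _ ≤ |ψ ((T + lam • A) u)| := le_abs_self _
        _ ≤ ‖ψ‖ * ‖(T + lam • A) u‖ := by rw [← Real.norm_eq_abs]; exact ψ.le_opNorm _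
        _ = ‖(T + lam • A) u‖ := by rw [hψn, one_mul]
        _ ≤ ‖T + lam • A‖ := (T + lam • A).unit_le_opNorm u (le_of_eq hun)
  · -- no pointwise Birkhoff-James orthogonality on the norm attainment set
    intro z hzM hBJ
    have hgz : g z ≠ 0 := hgker z hzM
    have hTz0 : T z ≠ 0 := fun h => hT0.ne' (by rw [← hzM.2, h, norm_zero])
    have hhyp : ∀ a b : ℝ, |a| * ‖T z‖ ≤ ‖a • (T z) + b • (A z)‖ := by
      intro a b
      rcases eq_or_ne a 0 with rfl | ha
      · simp
        try positivity
      · have h1 := hBJ (b / a)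
        have h2 : a • (T z + (b / a) • A z) = a • T z + b • A z := by
          rw [smul_add, smul_smul, mul_comm a (b / a), div_mul_cancel₀ b ha]
        calc |a| * ‖T z‖ ≤ |a| * ‖T z + (b / a) • A z‖ :=
              mul_le_mul_of_nonneg_left h1 (abs_nonneg a)
          _ = ‖a • (T z + (b / a) • A z)‖ := by rw [norm_smul, Real.norm_eq_abs]
          _ = ‖a • T z + b • A z‖ := by rw [h2]
    obtain ⟨ψ, hψ1, hψ2, hψ3⟩ := james (T z) (A z) hTz0 hhyp
    have hψz : ψ (T z) = ‖T‖ := by rw [hψ2, hzM.2]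
    have hw0 : ψ (T v - T u) = 0 := by
      have h4 : ψ (A z) = g z * ψ (T v - T u) := by
        rw [hAapply, map_smul, smul_eq_mul]
      rw [h4] at hψ3
      exact (mul_eq_zero.1 hψ3).resolve_left hgz
    have hcuv : ψ (T u) = ψ (T v) := by
      rw [map_sub] at hw0
      linarith
    exact main z hzM ψ hψ1 hψz hcuv
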